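/- arXiv:1409.2023 — 3 statements merged into one kernel-verified Lean document; each statement's English description precedes it below -/
import Mathlib

section
/- Suppose u : ℝ → ℝ is continuously differentiable, bounded above, and satisfies u'(φ) > u'(-φ) for all φ > 0. Then lim_{x → -∞} u(x) > -∞ (i.e., u is also bounded below). -/
/-- If `u : ℝ → ℝ` is `C¹`, bounded above, and `u'(φ) > u'(-φ)` for all `φ > 0`,
then `u` is bounded below. -/
theorem bounded_below_of_deriv_condition
    (u : ℝ → ℝ) (hu : ContDiff ℝ 1 u)
    (hbdd : ∃ C, ∀ x, u x ≤ C)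
    (hderiv : ∀ φ : ℝ, 0 < φ → deriv u (-φ) < deriv u φ) :
    BddBelow (Set.range u) := by
  obtain ⟨C, hC⟩ := hbdd
  have hdiff : Differentiable ℝ u := hu.differentiable one_ne_zero
  set v : ℝ → ℝ := fun x => u x + u (-x) with hv
  have hvderiv : ∀ x : ℝ, HasDerivAt v (deriv u x - deriv u (-x)) x := by
    intro x
    have h1 : HasDerivAt u (deriv u x) x := (hdiff x).hasDerivAt
    have h2 : HasDerivAt (fun y : ℝ => u (-y)) (-(deriv u (-x))) x := by
      have h := ((hdiff (-x)).hasDerivAt).comp x (hasDerivAt_neg x)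
      rw [mul_neg_one] at h
      exact h
    rw [sub_eq_add_neg]
    exact h1.add h2
  have hvcont : Continuous v := by
    exact (hu.continuous).add (hu.continuous.comp continuous_neg)
  have hmono : StrictMonoOn v (Set.Ici (1 : ℝ)) := by
    apply strictMonoOn_of_deriv_pos (convex_Ici 1) (hvcont.continuousOn)
    intro x hx
    rw [interior_Ici] at hx
    have hx0 : (0 : ℝ) < x := lt_trans one_pos hx
    rw [(hvderiv x).deriv]
    linarith [hderiv x hx0]
  have hv1 : ∀ x : ℝ, 1 ≤ x → v 1 ≤ v x := by
    intro x hx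
    exact hmono.monotoneOn (Set.self_mem_Ici) hx hx
  -- bound on the compact interval [-1, 1]
  obtain ⟨x₀, _, hx₀⟩ := (isCompact_Icc (a := (-1:ℝ)) (b := 1)).exists_isMinOn
    (Set.nonempty_Icc.mpr (by norm_num)) (hu.continuous.continuousOn)
  refine ⟨min (v 1 - C) (u x₀), ?_⟩
  rintro _ ⟨y, rfl⟩
  rcases le_or_gt y (-1) with h | h
  · have h1 : 1 ≤ -y := by linarith
    have := hv1 (-y) h1
    have huy : u (-y) + u (-(-y)) = v (-y) := rfl
    have hC' : u (-(-y)) ≤ C := hC _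
    calc min (v 1 - C) (u x₀) ≤ v 1 - C := min_le_left _ _
      _ ≤ v (-y) - C := by linarith
      _ ≤ u (- -y) := by rw [← huy]; linarith [hC (-y)]
      _ = u y := by rw [neg_neg]
  · rcases le_or_gt y 1 with h2 | h2
    · have : u x₀ ≤ u y := hx₀ ⟨by linarith, h2⟩
      exact le_trans (min_le_right _ _) this
    · have := hv1 y h2.le
      have hC' : u (-y) ≤ C := hC _
      calc min (v 1 - C) (u x₀) ≤ v 1 - C := min_le_left _ _
        _ ≤ v y - C := by linarith
        _ ≤ u y := by simp only [hv]; linarith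
end

section
/- Let u : ℝ → ℝ be continuously differentiable, bounded above, with u'(φ) > u'(-φ) for all φ > 0, and let ΔS take values ±1 with probability 1/2 each. Then there is no φ* ∈ ℝ maximizing φ ↦ E[u(φ·ΔS)] over ℝ. -/
open MeasureTheory Filter Set Topology ENNReal

/-- For `u` C¹, bounded above, with `u'(φ) > u'(-φ)` for `φ > 0`, and
`ΔS = ±1` with probability `1/2` each, no `φ*` maximises `φ ↦ E[u(φ·ΔS)]` over `ℝ`. -/
theorem no_optimal_strategy
    {Ω : Type*} [MeasurableSpace Ω] (P : Measure Ω) [IsProbabilityMeasure P]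
    (u : ℝ → ℝ) (hu : ContDiff ℝ 1 u)
    (hbdd : ∃ C, ∀ x, u x ≤ C)
    (hderiv : ∀ φ : ℝ, 0 < φ → deriv u (-φ) < deriv u φ)
    (ΔS : Ω → ℝ) (hmeas : Measurable ΔS)
    (h1 : P {ω | ΔS ω = 1} = 1/2) (h2 : P {ω | ΔS ω = -1} = 1/2) :
    ¬ ∃ φstar : ℝ, ∀ φ : ℝ, ∫ ω, u (φ * ΔS ω) ∂P ≤ ∫ ω, u (φstar * ΔS ω) ∂P := by
  set A : Set Ω := {ω | ΔS ω = 1} with hA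
  set B : Set Ω := {ω | ΔS ω = -1} with hB
  have hAmeas : MeasurableSet A := hmeas (measurableSet_singleton 1)
  have hBmeas : MeasurableSet B := hmeas (measurableSet_singleton (-1))
  have hdisj : Disjoint A B := by
    rw [Set.disjoint_left]
    intro ω hωA hωB
    exact absurd (hωA.symm.trans hωB) (by norm_num)
  have hunion : P (A ∪ B) = 1 := by
    rw [measure_union hdisj hBmeas, h1, h2]
    norm_num
    exact ENNReal.inv_two_add_inv_two
  have hcompl : P (A ∪ B)ᶜ = 0 := by
    have := measure_compl (hAmeas.union hBmeas) (measure_ne_top P _)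
    rw [hunion, measure_univ] at this
    simpa using this
  have hae : ∀ᵐ ω ∂P, ω ∈ A ∪ B := by
    rw [ae_iff]
    exact hcompl
  -- Key: the integral equals (u φ + u (-φ)) / 2
  have key : ∀ φ : ℝ, ∫ ω, u (φ * ΔS ω) ∂P = (u φ + u (-φ)) / 2 := by
    intro φ
    have heq : ∀ᵐ ω ∂P, u (φ * ΔS ω) =
        (A.indicator (fun _ => u φ) ω + B.indicator (fun _ => u (-φ)) ω) := by
      filter_upwards [hae] with ω hω
      rcases hω with hω | hω
      · have hnB : ω ∉ B := by
          intro hωB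
          exact absurd (hω.symm.trans hωB) (by norm_num)
        rw [Set.indicator_of_mem hω, Set.indicator_of_notMem hnB]
        simp [show ΔS ω = 1 from hω]
      · have hnA : ω ∉ A := by
          intro hωA
          exact absurd (hωA.symm.trans hω) (by norm_num)
        rw [Set.indicator_of_notMem hnA, Set.indicator_of_mem hω]
        simp [show ΔS ω = -1 from hω, mul_comm]
    rw [integral_congr_ae heq]
    have hintA : Integrable (A.indicator (fun _ => u φ)) P :=
      (integrable_const _).indicator hAmeas
    have hintB : Integrable (B.indicator (fun _ => u (-φ))) P :=
      (integrable_const _).indicator hBmeas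
    rw [integral_add hintA hintB, integral_indicator_const _ hAmeas,
      integral_indicator_const _ hBmeas, measureReal_def, measureReal_def, h1, h2]
    have : ((1 : ℝ≥0∞)/2).toReal = 1/2 := by simp
    rw [this]
    simp [smul_eq_mul]
    ring
  -- Define g and show it is strictly monotone on [0, ∞)
  set g : ℝ → ℝ := fun φ => (u φ + u (-φ)) / 2 with hg
  have hud : Differentiable ℝ u := hu.differentiable one_ne_zero
  have hgderiv : ∀ x : ℝ, HasDerivAt g ((deriv u x - deriv u (-x)) / 2) x := by
    intro x
    have h1' : HasDerivAt u (deriv u x) x := (hud x).hasDerivAt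
    have h2' : HasDerivAt (fun y : ℝ => u (-y)) (-(deriv u (-x))) x := by
      have := ((hud (-x)).hasDerivAt).comp x (hasDerivAt_neg x)
      simpa [Function.comp_def] using this
    have h3 := (h1'.add h2').div_const 2
    have heq2 : (deriv u x - deriv u (-x)) / 2 = (deriv u x + -(deriv u (-x))) / 2 := by ring
    rw [heq2]
    exact h3
  have hmono : StrictMonoOn g (Set.Ici (0:ℝ)) := by
    apply strictMonoOn_of_deriv_pos (convex_Ici 0)
    · exact (Continuous.add hud.continuous (hud.continuous.comp continuous_neg)).div_const 2
        |>.continuousOn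
    · intro x hx
      rw [interior_Ici] at hx
      rw [(hgderiv x).deriv]
      have := hderiv x hx
      linarith
  rintro ⟨φs, hφs⟩
  have habs : |φs| < |φs| + 1 := by linarith
  have hm : g |φs| < g (|φs| + 1) :=
    hmono (Set.mem_Ici.mpr (abs_nonneg φs))
      (Set.mem_Ici.mpr (by positivity)) habs
  have hgeven : g φs = g |φs| := by
    rcases abs_choice φs with h | h
    · rw [h]
    · rw [h]; simp only [hg, neg_neg]; ring
  have hm2 : g φs < g (|φs| + 1) := lt_of_le_of_lt (le_of_eq hgeven) hm
  have hle := hφs (|φs| + 1)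
  rw [key, key] at hle
  exact absurd hle (not_le.mpr hm2)
end

section
/- Let X_n, n ∈ ℕ, be real random variables converging in law to X, let u₊, u₋ : [0,∞) → [0,∞) and w₊, w₋ : [0,1] → [0,1] be continuous non-decreasing with u_±(0)=0, w_±(0)=0, w_±(1)=1, and u₊ bounded above. Define V(Y) := ∫₀^∞ w₊(P(u₊(Y₊) ≥ y)) dy − ∫₀^∞ w₋(P(u₋(Y₋) ≥ y)) dy. Then limsup_n V(X_n) ≤ V(X). -/
open MeasureTheory Filter Set Topology ENNReal


lemma cpt_ereal_limsup_sub {A B : ℕ → ℝ≥0∞} {A' B' : ℝ≥0∞}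
    (hA : limsup A atTop ≤ A') (hA' : A' ≠ ⊤) (hB : B' ≤ liminf B atTop) :
    limsup (fun n => (A n : EReal) - (B n : EReal)) atTop ≤ (A' : EReal) - (B' : EReal) := by
  have h1 : limsup (fun n => (A n : EReal)) atTop = ((limsup A atTop : ℝ≥0∞) : EReal) :=
    (EReal.coe_ennreal_strictMono.monotone.map_limsup_of_continuousAt A
      continuous_coe_ennreal_ereal.continuousAt).symm
  have h2 : liminf (fun n => (B n : EReal)) atTop = ((liminf B atTop : ℝ≥0∞) : EReal) :=
    (EReal.coe_ennreal_strictMono.monotone.map_liminf_of_continuousAt B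
      continuous_coe_ennreal_ereal.continuousAt).symm
  have hne : limsup (fun n => (A n : EReal)) atTop ≠ ⊤ := by
    rw [h1, ne_eq, EReal.coe_ennreal_eq_top_iff]
    exact ne_top_of_le_ne_top hA' hA
  calc limsup (fun n => (A n : EReal) - (B n : EReal)) atTop
      = limsup ((fun n => (A n : EReal)) + (fun n => -(B n : EReal))) atTop := by
        simp only [Pi.add_apply, sub_eq_add_neg]; rfl
    _ ≤ limsup (fun n => (A n : EReal)) atTop + limsup (fun n => -(B n : EReal)) atTop :=
        EReal.limsup_add_le (Or.inl (h1 ▸ EReal.coe_ennreal_ne_bot _)) (Or.inl hne)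
    _ = limsup (fun n => (A n : EReal)) atTop + (- liminf (fun n => (B n : EReal)) atTop) := by
        rw [show (fun n => -(B n : EReal)) = -(fun n => (B n : EReal)) from rfl,
          EReal.limsup_neg]
    _ ≤ (A' : EReal) + (-(B' : EReal)) := by
        refine add_le_add ?_ ?_
        · rw [h1]; exact EReal.coe_ennreal_le_coe_ennreal_iff.mpr hA
        · rw [h2]; exact EReal.neg_le_neg_iff.mpr (EReal.coe_ennreal_le_coe_ennreal_iff.mpr hB)
    _ = (A' : EReal) - B' := (sub_eq_add_neg _ _).symm

lemma cpt_aux_tendsto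
    {Ω : Type*} [MeasurableSpace Ω] (P : Measure Ω) [IsProbabilityMeasure P]
    (X : ℕ → Ω → ℝ) (Xlim : Ω → ℝ)
    (hX : ∀ n, Measurable (X n)) (hXlim : Measurable Xlim)
    (hconv : ∀ f : BoundedContinuousFunction ℝ ℝ,
      Tendsto (fun n => ∫ ω, f (X n ω) ∂P) atTop (𝓝 (∫ ω, f (Xlim ω) ∂P)))
    (g : ℝ → ℝ) (hg : Continuous g) :
    ∃ S : Set ℝ, S.Countable ∧ ∀ y ∉ S,
      Tendsto (fun n => P {ω | y ≤ g (X n ω)}) atTop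
        (𝓝 (P {ω | y ≤ g (Xlim ω)})) := by
  have hgm : Measurable g := hg.measurable
  have hinst : ∀ n, IsProbabilityMeasure (P.map (fun ω => g (X n ω))) :=
    fun n => Measure.isProbabilityMeasure_map ((hgm.comp (hX n)).aemeasurable)
  have hinst' : IsProbabilityMeasure (P.map (fun ω => g (Xlim ω))) :=
    Measure.isProbabilityMeasure_map ((hgm.comp hXlim).aemeasurable)
  set ν : ProbabilityMeasure ℝ := ⟨P.map (fun ω => g (Xlim ω)), hinst'⟩ with hν
  set νs : ℕ → ProbabilityMeasure ℝ := fun n => ⟨P.map (fun ω => g (X n ω)), hinst n⟩ with hνs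
  have hweak : Tendsto νs atTop (𝓝 ν) := by
    rw [ProbabilityMeasure.tendsto_iff_forall_integral_tendsto]
    intro f
    have key := hconv (f.compContinuous ⟨g, hg⟩)
    simp only [BoundedContinuousFunction.compContinuous_apply, ContinuousMap.coe_mk] at key
    have h1 : ∀ n, ∫ x, f x ∂((νs n : Measure ℝ)) = ∫ ω, f (g (X n ω)) ∂P := by
      intro n
      exact integral_map ((hgm.comp (hX n)).aemeasurable) f.continuous.aestronglyMeasurable
    have h2 : ∫ x, f x ∂((ν : Measure ℝ)) = ∫ ω, f (g (Xlim ω)) ∂P :=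
      integral_map ((hgm.comp hXlim).aemeasurable) f.continuous.aestronglyMeasurable
    simp only [h1, h2]
    exact key
  refine ⟨{y : ℝ | P.map (fun ω => g (Xlim ω)) {y} ≠ 0}, ?_, ?_⟩
  · have := Measure.countable_meas_pos_of_disjoint_iUnion
      (μ := P.map (fun ω => g (Xlim ω))) (As := fun y : ℝ => {y})
      (fun y => measurableSet_singleton y)
      (fun y z hyz => by simp [Function.onFun, hyz])
    convert this using 1
    ext y
    simp [pos_iff_ne_zero]
  · intro y hy
    have hnull : (ν : Measure ℝ) (frontier (Ici y)) = 0 := by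
      rw [frontier_Ici]
      exact not_not.mp hy
    have key := ProbabilityMeasure.tendsto_measure_of_null_frontier_of_tendsto' hweak hnull
    have hmap : ∀ n, (νs n : Measure ℝ) (Ici y) = P {ω | y ≤ g (X n ω)} := by
      intro n
      rw [show ((νs n : Measure ℝ)) = P.map (fun ω => g (X n ω)) from rfl,
        Measure.map_apply (show Measurable fun ω => g (X n ω) from hgm.comp (hX n))
          measurableSet_Ici]
      rfl
    have hmap' : (ν : Measure ℝ) (Ici y) = P {ω | y ≤ g (Xlim ω)} := by
      rw [show ((ν : Measure ℝ)) = P.map (fun ω => g (Xlim ω)) from rfl,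
        Measure.map_apply (show Measurable fun ω => g (Xlim ω) from hgm.comp hXlim)
          measurableSet_Ici]
      rfl
    simpa only [hmap, hmap'] using key

/-- Upper semicontinuity of the CPT value along convergence in law: if
`Xₙ → X` in law and `V(Y) = ∫₀^∞ w₊(P(u₊(Y₊) ≥ y)) dy − ∫₀^∞ w₋(P(u₋(Y₋) ≥ y)) dy`
(valued in `EReal`, with `u₊` bounded above), then `limsup_n V(Xₙ) ≤ V(X)`. -/
theorem cpt_upper_semicontinuous
    {Ω : Type*} [MeasurableSpace Ω] (P : Measure Ω) [IsProbabilityMeasure P]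
    (X : ℕ → Ω → ℝ) (Xlim : Ω → ℝ)
    (hX : ∀ n, Measurable (X n)) (hXlim : Measurable Xlim)
    (hconv : ∀ f : BoundedContinuousFunction ℝ ℝ,
      Tendsto (fun n => ∫ ω, f (X n ω) ∂P) atTop (𝓝 (∫ ω, f (Xlim ω) ∂P)))
    (up um : ℝ → ℝ)
    (hupc : ContinuousOn up (Ici 0)) (humc : ContinuousOn um (Ici 0))
    (hupm : MonotoneOn up (Ici 0)) (humm : MonotoneOn um (Ici 0))
    (hup0 : up 0 = 0) (hum0 : um 0 = 0)
    (hupbdd : ∃ C, ∀ x : ℝ, 0 ≤ x → up x ≤ C)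
    (wp wm : ℝ → ℝ)
    (hwpc : ContinuousOn wp (Icc 0 1)) (hwmc : ContinuousOn wm (Icc 0 1))
    (hwpm : MonotoneOn wp (Icc 0 1)) (hwmm : MonotoneOn wm (Icc 0 1))
    (hwp0 : wp 0 = 0) (hwm0 : wm 0 = 0) (hwp1 : wp 1 = 1) (hwm1 : wm 1 = 1)
    (V : (Ω → ℝ) → EReal)
    (hV : ∀ Y : Ω → ℝ, V Y =
      ((∫⁻ y in Ioi (0:ℝ),
          ENNReal.ofReal (wp ((P {ω | y ≤ up (max (Y ω) 0)}).toReal))) : ℝ≥0∞)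
        - ((∫⁻ y in Ioi (0:ℝ),
          ENNReal.ofReal (wm ((P {ω | y ≤ um (max (-(Y ω)) 0)}).toReal))) : ℝ≥0∞)) :
    Filter.limsup (fun n => V (X n)) atTop ≤ V Xlim := by
  obtain ⟨C, hC⟩ := hupbdd
  have hC0 : (0:ℝ) ≤ C := hup0 ▸ hC 0 le_rfl
  have hgpc : Continuous fun x : ℝ => up (max x 0) :=
    hupc.comp_continuous (continuous_id.max continuous_const) fun x => mem_Ici.mpr (le_max_right x 0)
  have hgmc : Continuous fun x : ℝ => um (max (-x) 0) :=
    humc.comp_continuous (continuous_neg.max continuous_const)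
      fun x => mem_Ici.mpr (le_max_right (-x) 0)
  have hmem : ∀ s : Set Ω, (P s).toReal ∈ Icc (0:ℝ) 1 := fun s =>
    ⟨ENNReal.toReal_nonneg, (ENNReal.toReal_mono one_ne_top prob_le_one).trans_eq ENNReal.toReal_one⟩
  -- antitonicity, hence measurability, of the integrands
  have hantiP : ∀ Y : Ω → ℝ,
      Antitone fun y : ℝ => ENNReal.ofReal (wp ((P {ω | y ≤ up (max (Y ω) 0)}).toReal)) := by
    intro Y y1 y2 h
    refine ENNReal.ofReal_le_ofReal (hwpm (hmem _) (hmem _) ?_)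
    exact ENNReal.toReal_mono (measure_ne_top P _) (measure_mono fun ω hω => le_trans h hω)
  have hantiM : ∀ Y : Ω → ℝ,
      Antitone fun y : ℝ => ENNReal.ofReal (wm ((P {ω | y ≤ um (max (-(Y ω)) 0)}).toReal)) := by
    intro Y y1 y2 h
    refine ENNReal.ofReal_le_ofReal (hwmm (hmem _) (hmem _) ?_)
    exact ENNReal.toReal_mono (measure_ne_top P _) (measure_mono fun ω hω => le_trans h hω)
  -- the bounding function for the positive part
  set bd : ℝ → ℝ≥0∞ := (Iic C).indicator fun _ => 1 with hbd
  have hub : ∀ (Y : Ω → ℝ) (y : ℝ),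
      ENNReal.ofReal (wp ((P {ω | y ≤ up (max (Y ω) 0)}).toReal)) ≤ bd y := by
    intro Y y
    by_cases h : y ≤ C
    · rw [hbd, Set.indicator_of_mem (mem_Iic.mpr h)]
      have h1 : wp ((P {ω | y ≤ up (max (Y ω) 0)}).toReal) ≤ 1 :=
        hwp1 ▸ hwpm (hmem _) ⟨zero_le_one, le_rfl⟩ (hmem _).2
      calc ENNReal.ofReal (wp ((P {ω | y ≤ up (max (Y ω) 0)}).toReal))
          ≤ ENNReal.ofReal 1 := ENNReal.ofReal_le_ofReal h1
        _ = 1 := ENNReal.ofReal_one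
    · rw [hbd, Set.indicator_of_notMem (by simpa using h)]
      have hempty : {ω | y ≤ up (max (Y ω) 0)} = (∅ : Set Ω) :=
        Set.eq_empty_iff_forall_notMem.mpr fun ω hω =>
          absurd hω (not_le.mpr ((hC _ (le_max_right _ _)).trans_lt (not_le.mp h)))
      simp [hempty, hwp0]
  have hbd_int : ∫⁻ y in Ioi (0:ℝ), bd y = ENNReal.ofReal C := by
    rw [hbd, lintegral_indicator_const measurableSet_Iic, one_mul,
      Measure.restrict_apply measurableSet_Iic, Set.inter_comm, Set.Ioi_inter_Iic,
      Real.volume_Ioc, sub_zero]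
  -- pointwise a.e. convergence of the integrands
  obtain ⟨Sp, hSpc, hSp⟩ :=
    cpt_aux_tendsto P X Xlim hX hXlim hconv (fun x => up (max x 0)) hgpc
  obtain ⟨Sm, hSmc, hSm⟩ :=
    cpt_aux_tendsto P X Xlim hX hXlim hconv (fun x => um (max (-x) 0)) hgmc
  have haeP : ∀ᵐ y ∂(volume.restrict (Ioi (0:ℝ))),
      Tendsto (fun n => ENNReal.ofReal (wp ((P {ω | y ≤ up (max (X n ω) 0)}).toReal))) atTop
        (𝓝 (ENNReal.ofReal (wp ((P {ω | y ≤ up (max (Xlim ω) 0)}).toReal)))) := by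
    refine ae_restrict_of_ae ?_
    have hzero : Spᶜ ∈ ae (volume : Measure ℝ) :=
      mem_ae_iff.mpr (by simpa using hSpc.measure_zero volume)
    filter_upwards [hzero] with y hy
    have h1 := hSp y hy
    have h2 : Tendsto (fun n => (P {ω | y ≤ up (max (X n ω) 0)}).toReal) atTop
        (𝓝 ((P {ω | y ≤ up (max (Xlim ω) 0)}).toReal)) :=
      (ENNReal.tendsto_toReal (measure_ne_top P _)).comp h1
    have h3 := (hwpc _ (hmem {ω | y ≤ up (max (Xlim ω) 0)})).tendsto.comp
      (tendsto_nhdsWithin_of_tendsto_nhds_of_eventually_within _ h2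
        (Eventually.of_forall fun n => hmem _))
    exact (ENNReal.continuous_ofReal.tendsto _).comp h3
  have haeM : ∀ᵐ y ∂(volume.restrict (Ioi (0:ℝ))),
      Tendsto (fun n => ENNReal.ofReal (wm ((P {ω | y ≤ um (max (-(X n ω)) 0)}).toReal))) atTop
        (𝓝 (ENNReal.ofReal (wm ((P {ω | y ≤ um (max (-(Xlim ω)) 0)}).toReal)))) := by
    refine ae_restrict_of_ae ?_
    have hzero : Smᶜ ∈ ae (volume : Measure ℝ) :=
      mem_ae_iff.mpr (by simpa using hSmc.measure_zero volume)
    filter_upwards [hzero] with y hy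
    have h1 := hSm y hy
    have h2 : Tendsto (fun n => (P {ω | y ≤ um (max (-(X n ω)) 0)}).toReal) atTop
        (𝓝 ((P {ω | y ≤ um (max (-(Xlim ω)) 0)}).toReal)) :=
      (ENNReal.tendsto_toReal (measure_ne_top P _)).comp h1
    have h3 := (hwmc _ (hmem {ω | y ≤ um (max (-(Xlim ω)) 0)})).tendsto.comp
      (tendsto_nhdsWithin_of_tendsto_nhds_of_eventually_within _ h2
        (Eventually.of_forall fun n => hmem _))
    exact (ENNReal.continuous_ofReal.tendsto _).comp h3
  -- reverse Fatou for the positive part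
  have keyP : limsup (fun n => ∫⁻ y in Ioi (0:ℝ),
        ENNReal.ofReal (wp ((P {ω | y ≤ up (max (X n ω) 0)}).toReal))) atTop ≤
      ∫⁻ y in Ioi (0:ℝ), ENNReal.ofReal (wp ((P {ω | y ≤ up (max (Xlim ω) 0)}).toReal)) := by
    calc limsup (fun n => ∫⁻ y in Ioi (0:ℝ),
          ENNReal.ofReal (wp ((P {ω | y ≤ up (max (X n ω) 0)}).toReal))) atTop
        ≤ ∫⁻ y in Ioi (0:ℝ), limsup (fun n =>
            ENNReal.ofReal (wp ((P {ω | y ≤ up (max (X n ω) 0)}).toReal))) atTop :=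
          limsup_lintegral_le bd (fun n => (hantiP (X n)).measurable)
            (fun n => Eventually.of_forall (hub (X n)))
            (by rw [hbd_int]; exact ofReal_ne_top)
      _ = ∫⁻ y in Ioi (0:ℝ), ENNReal.ofReal (wp ((P {ω | y ≤ up (max (Xlim ω) 0)}).toReal)) :=
          lintegral_congr_ae (haeP.mono fun y hy => hy.limsup_eq)
  -- Fatou for the negative part
  have keyM : (∫⁻ y in Ioi (0:ℝ),
        ENNReal.ofReal (wm ((P {ω | y ≤ um (max (-(Xlim ω)) 0)}).toReal))) ≤
      liminf (fun n => ∫⁻ y in Ioi (0:ℝ),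
        ENNReal.ofReal (wm ((P {ω | y ≤ um (max (-(X n ω)) 0)}).toReal))) atTop := by
    calc (∫⁻ y in Ioi (0:ℝ), ENNReal.ofReal (wm ((P {ω | y ≤ um (max (-(Xlim ω)) 0)}).toReal)))
        = ∫⁻ y in Ioi (0:ℝ), liminf (fun n =>
            ENNReal.ofReal (wm ((P {ω | y ≤ um (max (-(X n ω)) 0)}).toReal))) atTop :=
          (lintegral_congr_ae (haeM.mono fun y hy => hy.liminf_eq)).symm
      _ ≤ liminf (fun n => ∫⁻ y in Ioi (0:ℝ),
            ENNReal.ofReal (wm ((P {ω | y ≤ um (max (-(X n ω)) 0)}).toReal))) atTop :=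
          lintegral_liminf_le (fun n => (hantiM (X n)).measurable)
  have hA'top : (∫⁻ y in Ioi (0:ℝ),
      ENNReal.ofReal (wp ((P {ω | y ≤ up (max (Xlim ω) 0)}).toReal))) ≠ ⊤ :=
    ne_top_of_le_ne_top ofReal_ne_top ((lintegral_mono (hub Xlim)).trans_eq hbd_int)
  simp only [hV]
  exact cpt_ereal_limsup_sub keyP hA'top keyM
end
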